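/- Centered chi-square–variance bound: with τ = Σ_{i>k} p_i, μ_P = Σ_{i=1}^{n} p_i v_i, and Var_P(V) = Σ_{i=1}^{n} p_i ‖v_i − μ_P‖₂², the output error satisfies ‖ Σ_i p_i v_i − Σ_i p̂_i v_i ‖₂ ≤ √(τ/(1−τ)) · √(Var_P(V)). -/

import Mathlib

/-- **Centered chi-square–variance bound.** With tail mass `τ = ∑_{i>k} p i`,
`0 < τ < 1`, full mean `μ_P = ∑ p i • v i`, and variance
`Var_P(V) = ∑ p i ‖v i − μ_P‖²`, the output error satisfies
`‖∑ p i • v i − ∑ p̂ i • v i‖ ≤ √(τ/(1−τ)) · √(Var_P(V))`. -/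
theorem chi_square_variance_bound (n k d : ℕ) (hk : 1 ≤ k) (hkn : k < n)
    (s : Fin n → ℝ) (hs : ∀ i j : Fin n, i ≤ j → s j ≤ s i)
    (p phat : Fin n → ℝ)
    (hp : ∀ i, p i = Real.exp (s i) / ∑ j, Real.exp (s j))
    (hphat : ∀ i : Fin n, phat i =
      if (i : ℕ) < k then
        Real.exp (s i) /
          ∑ j ∈ Finset.univ.filter (fun j : Fin n => (j : ℕ) < k), Real.exp (s j)
      else 0)
    (v : Fin n → EuclideanSpace ℝ (Fin d))
    (τ : ℝ) (hτ : τ = ∑ i ∈ Finset.univ.filter (fun i : Fin n => k ≤ (i : ℕ)), p i)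
    (hτ0 : 0 < τ) (hτ1 : τ < 1)
    (μP : EuclideanSpace ℝ (Fin d)) (hμP : μP = ∑ i, p i • v i)
    (varP : ℝ) (hvarP : varP = ∑ i, p i * ‖v i - μP‖ ^ 2) :
    ‖(∑ i, p i • v i) - ∑ i, phat i • v i‖
      ≤ Real.sqrt (τ / (1 - τ)) * Real.sqrt varP := by
  have hτ1' : (0:ℝ) < 1 - τ := by linarith
  set S : ℝ := ∑ j, Real.exp (s j) with hS
  have hS0 : 0 < S := Finset.sum_pos (fun j _ => Real.exp_pos _)
    ⟨⟨0, lt_trans (Nat.lt_of_lt_of_le (Nat.zero_lt_one) hk) hkn⟩, Finset.mem_univ _⟩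
  have hp_pos : ∀ i, 0 < p i := fun i => by
    rw [hp]; exact div_pos (Real.exp_pos _) hS0
  have hpsum : ∑ i, p i = 1 := by
    simp only [hp]; rw [← Finset.sum_div]; field_simp; exact hS.symm
  set Q : Finset (Fin n) := Finset.univ.filter (fun i : Fin n => (i : ℕ) < k) with hQ
  have hsplit : ∑ i ∈ Q, p i + ∑ i ∈ Finset.univ.filter (fun i : Fin n => k ≤ (i : ℕ)), p i
      = 1 := by
    rw [← hpsum]
    rw [← Finset.sum_filter_add_sum_filter_not Finset.univ (fun i : Fin n => (i : ℕ) < k) p]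
    congr 1
    apply Finset.sum_congr _ (fun _ _ => rfl)
    ext i; simp [not_lt]
  have hQsum : ∑ i ∈ Q, p i = 1 - τ := by rw [← hτ] at hsplit; linarith
  set T : ℝ := ∑ j ∈ Q, Real.exp (s j) with hT
  have hTdiv : T / S = 1 - τ := by
    rw [← hQsum]; simp only [hp, hT, Finset.sum_div]
  have hTS : T = (1 - τ) * S := by
    rw [← hTdiv]; field_simp
  have hT0 : 0 < T := by rw [hTS]; positivity
  have hphat' : ∀ i : Fin n, phat i = if (i : ℕ) < k then p i / (1 - τ) else 0 := by
    intro i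
    rw [hphat]
    by_cases h : (i : ℕ) < k
    · simp only [h, if_true, hp]
      rw [hTS]
      rw [div_div]
      congr 1
      ring
    · simp [h]
  -- error vector
  have hdiff : (∑ i, p i • v i) - ∑ i, phat i • v i
      = ∑ i, (p i - phat i) • (v i - μP) := by
    have hphatsum : ∑ i, phat i = 1 := by
      calc ∑ i, phat i = ∑ i ∈ Q, p i / (1 - τ) := by
            rw [Finset.sum_filter]
            exact Finset.sum_congr rfl (fun i _ => by rw [hphat' i])
        _ = 1 := by rw [← Finset.sum_div, hQsum, div_self (ne_of_gt hτ1')]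
    have : ∑ i, (p i - phat i) • (v i - μP)
        = (∑ i, p i • v i) - (∑ i, phat i • v i)
          - (∑ i, (p i - phat i)) • μP := by
      rw [Finset.sum_smul]
      rw [← Finset.sum_sub_distrib, ← Finset.sum_sub_distrib]
      refine Finset.sum_congr rfl fun i _ => ?_
      rw [smul_sub, sub_smul]
    rw [this, Finset.sum_sub_distrib, hpsum, hphatsum]
    simp
  rw [hdiff]
  -- triangle inequality then Cauchy-Schwarz
  calc ‖∑ i, (p i - phat i) • (v i - μP)‖
      ≤ ∑ i, ‖(p i - phat i) • (v i - μP)‖ := norm_sum_le _ _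
    _ = ∑ i, (|p i - phat i| / Real.sqrt (p i)) * (Real.sqrt (p i) * ‖v i - μP‖) := by
        apply Finset.sum_congr rfl
        intro i _
        rw [norm_smul, Real.norm_eq_abs]
        have hsp : Real.sqrt (p i) ≠ 0 := ne_of_gt (Real.sqrt_pos.mpr (hp_pos i))
        rw [div_mul_eq_mul_div, mul_comm (Real.sqrt (p i)) ‖v i - μP‖, ← mul_assoc,
          mul_div_assoc, div_self hsp, mul_one]
    _ ≤ Real.sqrt (∑ i, (|p i - phat i| / Real.sqrt (p i)) ^ 2)
        * Real.sqrt (∑ i, (Real.sqrt (p i) * ‖v i - μP‖) ^ 2) :=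
        Real.sum_mul_le_sqrt_mul_sqrt _ _ _
    _ = Real.sqrt (τ / (1 - τ)) * Real.sqrt varP := by
        congr 2
        · -- chi-square sum
          have hterm : ∀ i : Fin n, (|p i - phat i| / Real.sqrt (p i)) ^ 2
              = (p i - phat i) ^ 2 / p i := by
            intro i
            rw [div_pow, sq_abs, Real.sq_sqrt (le_of_lt (hp_pos i))]
          simp only [hterm]
          rw [← Finset.sum_filter_add_sum_filter_not Finset.univ
            (fun i : Fin n => (i : ℕ) < k) (fun i => (p i - phat i) ^ 2 / p i)]
          have h1 : ∑ i ∈ Finset.univ.filter (fun i : Fin n => (i : ℕ) < k),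
              (p i - phat i) ^ 2 / p i = τ ^ 2 / (1 - τ) := by
            have : ∀ i ∈ Q, (p i - phat i) ^ 2 / p i = p i * (τ / (1 - τ)) ^ 2 := by
              intro i hi
              have hik : (i : ℕ) < k := by simpa [hQ] using hi
              rw [hphat' i, if_pos hik]
              have hpi := hp_pos i
              field_simp
              ring
            rw [Finset.sum_congr rfl this, ← Finset.sum_mul, hQsum]
            field_simp
          have h2 : ∑ i ∈ Finset.univ.filter (fun i : Fin n => ¬ (i : ℕ) < k),
              (p i - phat i) ^ 2 / p i = τ := by
            have heq : ∀ i ∈ Finset.univ.filter (fun i : Fin n => ¬ (i : ℕ) < k),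
                (p i - phat i) ^ 2 / p i = p i := by
              intro i hi
              have hik : ¬ (i : ℕ) < k := by simpa using hi
              rw [hphat' i, if_neg hik]
              have hpi := hp_pos i
              field_simp
              ring
            rw [Finset.sum_congr rfl heq, hτ]
            apply Finset.sum_congr _ (fun _ _ => rfl)
            ext i; simp [not_lt]
          rw [h1, h2]
          field_simp
          ring
        · rw [hvarP]
          apply Finset.sum_congr rfl
          intro i _
          rw [mul_pow, Real.sq_sqrt (le_of_lt (hp_pos i))]
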